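/- arXiv:1001.5089 — 3 statements merged into one kernel-verified Lean document; each statement's English description precedes it below -/
import Mathlib

section
/- In the planar widely-spaced case, for any σ > 0 there exist constants δ, k > 0 such that for every x₀ = (x₀₁, x₀₂) with ‖x₀‖ < δ and every solution x = (x₁, x₂) with x(0) = x₀, the second component satisfies |x₂(t)| ≤ k · exp((αa + σ)t) · ‖x₀‖ for all t ≥ 0. -/
open MeasureTheory Set

/-- The point `(u, v)` of the Euclidean plane. -/
noncomputable def ePair (u v : ℝ) : EuclideanSpace ℝ (Fin 2) :=
  (WithLp.equiv 2 (Fin 2 → ℝ)).symm ![u, v]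

/-- `x : [0,∞) → ℝ²` is a solution of `ẋ = A x + b(x)` with `A = diag(a, κa)`. -/
def IsSolutionP (a κ : ℝ) (b : EuclideanSpace ℝ (Fin 2) → EuclideanSpace ℝ (Fin 2))
    (x : ℝ → EuclideanSpace ℝ (Fin 2)) : Prop :=
  ∀ t : ℝ, 0 ≤ t →
    HasDerivWithinAt x
      (ePair (a * x t 0 + b (x t) 0) (κ * a * x t 1 + b (x t) 1)) (Ici 0) t

lemma ePair_zero (u v : ℝ) : ePair u v 0 = u := rfl
lemma ePair_one (u v : ℝ) : ePair u v 1 = v := rfl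

lemma inner_two (u v : EuclideanSpace ℝ (Fin 2)) :
    (inner ℝ u v : ℝ) = u 0 * v 0 + u 1 * v 1 := by
  simp [PiLp.inner_apply, Fin.sum_univ_two, RCLike.inner_apply, mul_comm]

lemma coord_le_norm (y : EuclideanSpace ℝ (Fin 2)) (i : Fin 2) : |y i| ≤ ‖y‖ := by
  have h1 : |y i| = Real.sqrt (‖y i‖^2) := by rw [Real.sqrt_sq_eq_abs]; simp
  rw [h1, EuclideanSpace.norm_eq]
  apply Real.sqrt_le_sqrt
  exact Finset.single_le_sum (f := fun j => ‖y j‖^2) (fun j _ => sq_nonneg _) (Finset.mem_univ i)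

lemma gron {f f' : ℝ → ℝ} {K T : ℝ}
    (hcont : ContinuousOn f (Icc 0 T))
    (hderiv : ∀ s ∈ Ico (0:ℝ) T, HasDerivWithinAt f (f' s) (Ici s) s)
    (bound : ∀ s ∈ Ico (0:ℝ) T, f' s ≤ K * f s) :
    ∀ t ∈ Icc (0:ℝ) T, f t ≤ f 0 * Real.exp (K * t) := by
  intro t ht
  have := le_gronwallBound_of_liminf_deriv_right_le (ε := 0) hcont
    (fun s hs r hr => (hderiv s hs).liminf_right_slope_le hr) (le_refl (f 0))
    (fun s hs => by simpa using bound s hs) t ht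
  simpa [gronwallBound_ε0] using this


set_option maxHeartbeats 1000000 in
/-- Planar widely-spaced case (`A = diag(a, κa)`, `a < 0`,
`κ ≥ α`): for any `σ > 0` there are `δ, k > 0` such that any solution `x` with
`‖x(0)‖ < δ` has second component satisfying
`|x₂(t)| ≤ k · exp((αa + σ)t) · ‖x₀‖` for all `t ≥ 0`. -/
theorem stmt13 (a κ : ℝ) (ha : a < 0) (hκ1 : 1 ≤ κ)
    (b : EuclideanSpace ℝ (Fin 2) → EuclideanSpace ℝ (Fin 2))
    (hb : ContDiff ℝ 1 b)
    (δ₀ K₁ K₂ α β : ℝ) (hδ₀ : 0 < δ₀) (hK₁ : 0 < K₁) (hK₂ : 0 < K₂)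
    (hα : 1 < α) (hβ : 0 < β)
    (hbnd : ∀ y : EuclideanSpace ℝ (Fin 2), ‖y‖ < δ₀ → ‖b y‖ ≤ K₁ * ‖y‖ ^ α)
    (hDbnd : ∀ y : EuclideanSpace ℝ (Fin 2), ‖y‖ < δ₀ → ‖fderiv ℝ b y‖ ≤ K₂ * ‖y‖ ^ β)
    (hκα : α ≤ κ)
    (σ : ℝ) (hσ : 0 < σ) :
    ∃ δ > 0, ∃ k > 0, ∀ x₀ : EuclideanSpace ℝ (Fin 2), ‖x₀‖ < δ →
      ∀ x : ℝ → EuclideanSpace ℝ (Fin 2), IsSolutionP a κ b x → x 0 = x₀ →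
        ∀ t : ℝ, 0 ≤ t →
          |x t 1| ≤ k * Real.exp ((α * a + σ) * t) * ‖x₀‖ := by
  have hα0 : (0:ℝ) < α := by linarith
  set ε : ℝ := min (σ / (2 * α)) (-a) with hεdef
  have hε : 0 < ε := lt_min (by positivity) (by linarith)
  have hεσ : α * ε ≤ σ / 2 := by
    have h1 : ε ≤ σ / (2 * α) := min_le_left _ _
    calc α * ε ≤ α * (σ / (2 * α)) := mul_le_mul_of_nonneg_left h1 hα0.le
    _ = σ / 2 := by field_simp
  have hεa : a + ε ≤ 0 := by
    have := min_le_right (σ / (2 * α)) (-a); simp only [← hεdef] at this; linarith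
  -- choose δ₁
  set c : ℝ := (ε / K₁) ^ ((α - 1)⁻¹ : ℝ) with hcdef
  have hc : 0 < c := Real.rpow_pos_of_pos (by positivity) _
  set δ₁ : ℝ := min (δ₀ / 2) c with hδ₁def
  have hδ₁ : 0 < δ₁ := lt_min (by linarith) hc
  have hδ₁δ₀ : δ₁ < δ₀ := lt_of_le_of_lt (min_le_left _ _) (by linarith)
  have hδ₁K : K₁ * δ₁ ^ (α - 1) ≤ ε := by
    have h1 : δ₁ ^ (α - 1) ≤ c ^ (α - 1) :=
      Real.rpow_le_rpow hδ₁.le (min_le_right _ _) (by linarith)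
    have h2 : c ^ (α - 1) = ε / K₁ := by
      rw [hcdef, ← Real.rpow_mul (by positivity), inv_mul_cancel₀ (by linarith : α - 1 ≠ 0),
        Real.rpow_one]
    have h3 : δ₁ ^ (α - 1) ≤ ε / K₁ := h1.trans_eq h2
    calc K₁ * δ₁ ^ (α - 1) ≤ K₁ * (ε / K₁) := by nlinarith
    _ = ε := by field_simp
  refine ⟨δ₁, hδ₁, 1 + K₁ * δ₁ ^ (α - 1) * (2 / σ), by positivity, ?_⟩
  intro x₀ hx₀ x hsol hx0
  have hcx : ContinuousOn x (Ici 0) := fun s hs => (hsol s hs).continuousWithinAt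
  set D : ℝ → EuclideanSpace ℝ (Fin 2) := fun s =>
    ePair (a * x s 0 + b (x s) 0) (κ * a * x s 1 + b (x s) 1) with hDdef
  -- inner product estimate
  have hinner : ∀ s : ℝ, 0 ≤ s → ‖x s‖ ≤ δ₁ →
      (inner ℝ (x s) (D s) : ℝ) ≤ (a + ε) * (‖x s‖ * ‖x s‖) := by
    intro s hs hsmall
    set u := x s with hu
    have hrw : (inner ℝ u (D s) : ℝ) =
        u 0 * (a * u 0 + b u 0) + u 1 * (κ * a * u 1 + b u 1) := by
      rw [inner_two]; rfl
    have hub : (inner ℝ u (b u) : ℝ) = u 0 * b u 0 + u 1 * b u 1 := inner_two u (b u)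
    have hbu : ‖b u‖ ≤ K₁ * ‖u‖ ^ α := hbnd u (lt_of_le_of_lt hsmall hδ₁δ₀)
    have hib : (inner ℝ u (b u) : ℝ) ≤ ‖u‖ * ‖b u‖ := real_inner_le_norm u (b u)
    have hsq : u 0 * u 0 + u 1 * u 1 = ‖u‖ * ‖u‖ := by
      have h := inner_two u u
      rw [real_inner_self_eq_norm_mul_norm] at h; linarith
    have hκa : κ * a * (u 1 * u 1) ≤ a * (u 1 * u 1) :=
      mul_le_mul_of_nonneg_right (by nlinarith) (mul_self_nonneg _)
    have hsplit : ‖u‖ ^ α = ‖u‖ ^ (α - 1) * ‖u‖ := by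
      have h := Real.rpow_add' (x := ‖u‖) (y := α - 1) (z := 1) (norm_nonneg u) (by linarith)
      rw [Real.rpow_one, show α - 1 + 1 = α from by ring] at h
      exact h
    have hmono : ‖u‖ ^ (α - 1) ≤ δ₁ ^ (α - 1) :=
      Real.rpow_le_rpow (norm_nonneg u) hsmall (by linarith)
    have h5 : ‖u‖ * ‖b u‖ ≤ ε * (‖u‖ * ‖u‖) := by
      calc ‖u‖ * ‖b u‖ ≤ ‖u‖ * (K₁ * ‖u‖ ^ α) :=
            mul_le_mul_of_nonneg_left hbu (norm_nonneg u)
        _ = (K₁ * ‖u‖ ^ (α - 1)) * (‖u‖ * ‖u‖) := by rw [hsplit]; ring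
        _ ≤ ε * (‖u‖ * ‖u‖) := by
            apply mul_le_mul_of_nonneg_right _ (mul_self_nonneg _)
            calc K₁ * ‖u‖ ^ (α - 1) ≤ K₁ * δ₁ ^ (α - 1) :=
                  mul_le_mul_of_nonneg_left hmono hK₁.le
              _ ≤ ε := hδ₁K
    have h6 : (inner ℝ u (b u) : ℝ) ≤ ε * (‖u‖ * ‖u‖) := hib.trans h5
    rw [hrw]
    calc u 0 * (a * u 0 + b u 0) + u 1 * (κ * a * u 1 + b u 1)
        = a * (u 0 * u 0) + κ * a * (u 1 * u 1) + (u 0 * b u 0 + u 1 * b u 1) := by ring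
      _ = a * (u 0 * u 0) + κ * a * (u 1 * u 1) + (inner ℝ u (b u) : ℝ) := by rw [hub]
      _ ≤ a * (u 0 * u 0) + a * (u 1 * u 1) + ε * (‖u‖ * ‖u‖) := by linarith
      _ = (a + ε) * (‖u‖ * ‖u‖) := by rw [← hsq]; ring
  -- Gronwall estimate under a bootstrap hypothesis
  have key : ∀ T : ℝ, 0 ≤ T → (∀ s ∈ Ico (0:ℝ) T, ‖x s‖ < δ₁) →
      ∀ t ∈ Icc (0:ℝ) T, ‖x t‖ ≤ ‖x₀‖ * Real.exp ((a + ε) * t) := by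
    intro T hT hsmall
    set F : ℝ → ℝ := fun s => (inner ℝ (x s) (x s) : ℝ) with hFdef
    have hFc : ContinuousOn F (Icc 0 T) :=
      ContinuousOn.inner (hcx.mono (Icc_subset_Ici_self)) (hcx.mono (Icc_subset_Ici_self))
    have hFd : ∀ s ∈ Ico (0:ℝ) T,
        HasDerivWithinAt F (2 * (inner ℝ (x s) (D s) : ℝ)) (Ici s) s := by
      intro s hs
      have hx' : HasDerivWithinAt x (D s) (Ici s) s :=
        (hsol s hs.1).mono (Ici_subset_Ici.2 hs.1)
      have h := hx'.inner ℝ hx'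
      convert h using 1 <;> first | rfl | (rw [real_inner_comm]; ring)
    have hbd : ∀ s ∈ Ico (0:ℝ) T,
        2 * (inner ℝ (x s) (D s) : ℝ) ≤ (2 * (a + ε)) * F s := by
      intro s hs
      have h1 := hinner s hs.1 (hsmall s hs).le
      have hF : F s = ‖x s‖ * ‖x s‖ := real_inner_self_eq_norm_mul_norm (x s)
      rw [hF]; nlinarith
    have hG := gron (f := F) (f' := fun s => 2 * (inner ℝ (x s) (D s) : ℝ)) (K := 2 * (a + ε)) (T := T) hFc hFd hbd
    intro t ht
    have h1 : F t ≤ F 0 * Real.exp (2 * (a + ε) * t) := hG t ht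
    have hF0 : F 0 = ‖x₀‖ * ‖x₀‖ := by
      rw [hFdef]; simp only [hx0]; exact real_inner_self_eq_norm_mul_norm x₀
    have hFt : F t = ‖x t‖ * ‖x t‖ := real_inner_self_eq_norm_mul_norm (x t)
    have he : Real.exp (2 * (a + ε) * t) =
        Real.exp ((a + ε) * t) * Real.exp ((a + ε) * t) := by
      rw [← Real.exp_add]; ring_nf
    nlinarith [norm_nonneg (x t), norm_nonneg x₀, Real.exp_pos ((a + ε) * t),
      mul_nonneg (norm_nonneg x₀) (Real.exp_pos ((a + ε) * t)).le]
  -- bootstrap: the norm never reaches δ₁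
  have hall : ∀ t : ℝ, 0 ≤ t → ‖x t‖ < δ₁ := by
    by_contra hcon
    push_neg at hcon
    set B : Set ℝ := {t : ℝ | 0 ≤ t ∧ δ₁ ≤ ‖x t‖} with hBdef
    have hBne : B.Nonempty := by
      obtain ⟨t₀, ht₀, ht₀'⟩ := hcon
      exact ⟨t₀, ht₀, ht₀'⟩
    have hBclosed : IsClosed B := by
      have hBeq : B = Ici 0 ∩ (fun t => ‖x t‖) ⁻¹' (Ici δ₁) := by
        ext r; simp [hBdef, mem_Ici]
      rw [hBeq]
      exact ContinuousOn.preimage_isClosed_of_isClosed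
        (continuous_norm.comp_continuousOn hcx) isClosed_Ici isClosed_Ici
    have hbdd : BddBelow B := ⟨0, fun r hr => hr.1⟩
    set T := sInf B with hTdef
    have hTB : T ∈ B := IsClosed.csInf_mem hBclosed hBne hbdd
    have hT0 : 0 ≤ T := hTB.1
    have hsmall : ∀ s ∈ Ico (0:ℝ) T, ‖x s‖ < δ₁ := by
      intro s hs
      by_contra h
      push_neg at h
      exact absurd (csInf_le hbdd ⟨hs.1, h⟩) (not_le.2 hs.2)
    have hk := key T hT0 hsmall T ⟨hT0, le_refl T⟩
    have hexp : Real.exp ((a + ε) * T) ≤ 1 :=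
      Real.exp_le_one_iff.mpr (mul_nonpos_iff.mpr (Or.inr ⟨hεa, hT0⟩))
    have hle : ‖x T‖ ≤ ‖x₀‖ := by nlinarith [norm_nonneg x₀]
    linarith [hTB.2]
  have hnorm : ∀ t : ℝ, 0 ≤ t → ‖x t‖ ≤ ‖x₀‖ * Real.exp ((a + ε) * t) := fun t ht =>
    key t ht (fun s hs => hall s hs.1) t ⟨ht, le_refl t⟩
  -- second stage
  intro t ht
  set μ : ℝ := α * (a + ε) - κ * a with hμdef
  have hκa2 : κ * a ≤ α * a := mul_le_mul_of_nonpos_right hκα ha.le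
  have hμ : 0 ≤ μ := by nlinarith
  set C : ℝ := K₁ * δ₁ ^ (α - 1) * ‖x₀‖ * Real.exp (μ * t) with hCdef
  set g : ℝ → ℝ := fun s => Real.exp (-(κ * a) * s) * x s 1 with hgdef
  have hgd : ∀ s ∈ Icc (0:ℝ) t,
      HasDerivWithinAt g (Real.exp (-(κ * a) * s) * b (x s) 1) (Icc 0 t) s := by
    intro s hs
    have h1 : HasDerivWithinAt (fun r => x r 1) (κ * a * x s 1 + b (x s) 1) (Icc 0 t) s := by
      have hx' := (hsol s hs.1).mono (Icc_subset_Ici_self : Icc (0:ℝ) t ⊆ Ici 0)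
      have h := ((EuclideanSpace.proj (1 : Fin 2) :
          EuclideanSpace ℝ (Fin 2) →L[ℝ] ℝ).hasFDerivAt (x := x s)).comp_hasDerivWithinAt s hx'
      exact h
    have h2 : HasDerivAt (fun r => Real.exp (-(κ * a) * r))
        (-(κ * a) * Real.exp (-(κ * a) * s)) s := by
      have h3 : HasDerivAt (fun r => -(κ * a) * r) (-(κ * a)) s := by
        simpa using (hasDerivAt_id s).const_mul (-(κ * a))
      simpa [mul_comm] using h3.exp
    have h := (h2.hasDerivWithinAt).mul h1
    convert h using 1 <;> first | rfl | ring
  have hCbound : ∀ s ∈ Icc (0:ℝ) t, ‖Real.exp (-(κ * a) * s) * b (x s) 1‖ ≤ C := by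
    intro s hs
    have hs0 : 0 ≤ s := hs.1
    have hxs : ‖x s‖ ≤ ‖x₀‖ * Real.exp ((a + ε) * s) := hnorm s hs0
    have hxsδ : ‖x s‖ < δ₀ := lt_trans (hall s hs0) hδ₁δ₀
    have hb1 : |b (x s) 1| ≤ ‖b (x s)‖ := coord_le_norm (b (x s)) 1
    have hbx : ‖b (x s)‖ ≤ K₁ * ‖x s‖ ^ α := hbnd (x s) hxsδ
    have hpow : ‖x s‖ ^ α ≤ ‖x₀‖ ^ α * Real.exp ((a + ε) * s * α) := by
      calc ‖x s‖ ^ α ≤ (‖x₀‖ * Real.exp ((a + ε) * s)) ^ α :=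
            Real.rpow_le_rpow (norm_nonneg _) hxs hα0.le
        _ = ‖x₀‖ ^ α * Real.exp ((a + ε) * s) ^ α :=
            Real.mul_rpow (norm_nonneg _) (Real.exp_pos _).le
        _ = ‖x₀‖ ^ α * Real.exp ((a + ε) * s * α) := by rw [← Real.exp_mul]
    have hx0pow : ‖x₀‖ ^ α ≤ δ₁ ^ (α - 1) * ‖x₀‖ := by
      have hs1 : ‖x₀‖ ^ α = ‖x₀‖ ^ (α - 1) * ‖x₀‖ := by
        have h := Real.rpow_add' (x := ‖x₀‖) (y := α - 1) (z := 1) (norm_nonneg x₀) (by linarith)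
        rw [Real.rpow_one, show α - 1 + 1 = α from by ring] at h
        exact h
      rw [hs1]
      exact mul_le_mul_of_nonneg_right
        (Real.rpow_le_rpow (norm_nonneg x₀) (le_of_lt hx₀) (by linarith)) (norm_nonneg x₀)
    have hexpμ : Real.exp (-(κ * a) * s) * Real.exp ((a + ε) * s * α) ≤ Real.exp (μ * t) := by
      rw [← Real.exp_add]
      apply Real.exp_le_exp.mpr
      have h1 : -(κ * a) * s + (a + ε) * s * α = μ * s := by rw [hμdef]; ring
      rw [h1]
      exact mul_le_mul_of_nonneg_left hs.2 hμ
    rw [Real.norm_eq_abs, abs_mul, Real.abs_exp]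
    calc Real.exp (-(κ * a) * s) * |b (x s) 1|
        ≤ Real.exp (-(κ * a) * s) * (K₁ * ‖x s‖ ^ α) := by
          apply mul_le_mul_of_nonneg_left (hb1.trans hbx) (Real.exp_pos _).le
      _ ≤ Real.exp (-(κ * a) * s) * (K₁ * (‖x₀‖ ^ α * Real.exp ((a + ε) * s * α))) := by
          apply mul_le_mul_of_nonneg_left _ (Real.exp_pos _).le
          exact mul_le_mul_of_nonneg_left hpow hK₁.le
      _ ≤ Real.exp (-(κ * a) * s) * (K₁ * ((δ₁ ^ (α - 1) * ‖x₀‖) * Real.exp ((a + ε) * s * α))) := by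
          apply mul_le_mul_of_nonneg_left _ (Real.exp_pos _).le
          apply mul_le_mul_of_nonneg_left _ hK₁.le
          exact mul_le_mul_of_nonneg_right hx0pow (Real.exp_pos _).le
      _ = (K₁ * δ₁ ^ (α - 1) * ‖x₀‖) *
            (Real.exp (-(κ * a) * s) * Real.exp ((a + ε) * s * α)) := by ring
      _ ≤ (K₁ * δ₁ ^ (α - 1) * ‖x₀‖) * Real.exp (μ * t) := by
          apply mul_le_mul_of_nonneg_left hexpμ
          positivity
      _ = C := by rw [hCdef]
  have hmvt := Convex.norm_image_sub_le_of_norm_hasDerivWithin_le hgd hCbound (convex_Icc 0 t)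
    (⟨le_refl 0, ht⟩ : (0:ℝ) ∈ Icc (0:ℝ) t) (⟨ht, le_refl t⟩ : t ∈ Icc (0:ℝ) t)
  rw [Real.norm_eq_abs, Real.norm_eq_abs, sub_zero] at hmvt
  have hg0 : g 0 = x₀ 1 := by simp [hgdef, hx0]
  have hgt : |g t| ≤ ‖x₀‖ + C * t := by
    have h1 : |g t| - |g 0| ≤ |g t - g 0| := by
      have := abs_sub_abs_le_abs_sub (g t) (g 0)
      linarith
    have h2 : |g 0| ≤ ‖x₀‖ := by rw [hg0]; exact coord_le_norm x₀ 1
    have h3 : C * |t| = C * t := by rw [abs_of_nonneg ht]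
    linarith [hmvt, h3.le, h3.ge]
  have hxt1 : x t 1 = Real.exp (κ * a * t) * g t := by
    rw [hgdef]
    simp only []
    rw [← mul_assoc, ← Real.exp_add]
    norm_num
  -- final assembly
  have hexp1 : Real.exp (κ * a * t) ≤ Real.exp ((α * a + σ) * t) := by
    apply Real.exp_le_exp.mpr
    apply mul_le_mul_of_nonneg_right _ ht
    linarith
  have ht2 : t ≤ 2 / σ * Real.exp (σ / 2 * t) := by
    have h1 : σ / 2 * t + 1 ≤ Real.exp (σ / 2 * t) := Real.add_one_le_exp _
    have h2 : σ / 2 * t ≤ Real.exp (σ / 2 * t) := by linarith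
    calc t = 2 / σ * (σ / 2 * t) := by field_simp
      _ ≤ 2 / σ * Real.exp (σ / 2 * t) := by
          apply mul_le_mul_of_nonneg_left h2; positivity
  have hterm2 : Real.exp (κ * a * t) * (C * t) ≤
      K₁ * δ₁ ^ (α - 1) * (2 / σ) * Real.exp ((α * a + σ) * t) * ‖x₀‖ := by
    have he1 : Real.exp (κ * a * t) * Real.exp (μ * t) = Real.exp (α * (a + ε) * t) := by
      rw [← Real.exp_add, hμdef]; ring_nf
    have he2 : Real.exp (α * (a + ε) * t) ≤ Real.exp ((α * a + σ / 2) * t) := by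
      apply Real.exp_le_exp.mpr
      apply mul_le_mul_of_nonneg_right _ ht
      nlinarith
    have he3 : t * Real.exp (α * (a + ε) * t) ≤ 2 / σ * Real.exp ((α * a + σ) * t) := by
      calc t * Real.exp (α * (a + ε) * t) ≤ t * Real.exp ((α * a + σ / 2) * t) :=
            mul_le_mul_of_nonneg_left he2 ht
        _ ≤ (2 / σ * Real.exp (σ / 2 * t)) * Real.exp ((α * a + σ / 2) * t) :=
            mul_le_mul_of_nonneg_right ht2 (Real.exp_pos _).le
        _ = 2 / σ * Real.exp ((α * a + σ) * t) := by
            rw [mul_assoc, ← Real.exp_add]; ring_nf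
    calc Real.exp (κ * a * t) * (C * t)
        = (K₁ * δ₁ ^ (α - 1) * ‖x₀‖) * (t * (Real.exp (κ * a * t) * Real.exp (μ * t))) := by
          rw [hCdef]; ring
      _ = (K₁ * δ₁ ^ (α - 1) * ‖x₀‖) * (t * Real.exp (α * (a + ε) * t)) := by rw [he1]
      _ ≤ (K₁ * δ₁ ^ (α - 1) * ‖x₀‖) * (2 / σ * Real.exp ((α * a + σ) * t)) := by
          apply mul_le_mul_of_nonneg_left he3; positivity
      _ = K₁ * δ₁ ^ (α - 1) * (2 / σ) * Real.exp ((α * a + σ) * t) * ‖x₀‖ := by ring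
  have habs : |x t 1| ≤ Real.exp (κ * a * t) * (‖x₀‖ + C * t) := by
    rw [hxt1, abs_mul, Real.abs_exp]
    exact mul_le_mul_of_nonneg_left hgt (Real.exp_pos _).le
  calc |x t 1| ≤ Real.exp (κ * a * t) * ‖x₀‖ + Real.exp (κ * a * t) * (C * t) := by
        rw [mul_add] at habs; linarith
    _ ≤ Real.exp ((α * a + σ) * t) * ‖x₀‖ +
        K₁ * δ₁ ^ (α - 1) * (2 / σ) * Real.exp ((α * a + σ) * t) * ‖x₀‖ := by
        have := mul_le_mul_of_nonneg_right hexp1 (norm_nonneg x₀)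
        linarith [hterm2]
    _ = (1 + K₁ * δ₁ ^ (α - 1) * (2 / σ)) * Real.exp ((α * a + σ) * t) * ‖x₀‖ := by ring
end

section
/- In the planar widely-spaced case, there exist constants δ, k > 0 such that for every x₀ = (x₀₁, x₀₂) with ‖x₀‖ < δ and every solution x with x(0) = x₀, the integral defining ψ₁(x₀) := x₀₁ + ∫₀^∞ e^{−as} b₁(x(s)) ds converges and |ψ₁(x₀) − x₀₁| ≤ k‖x₀‖^α. -/
open MeasureTheory Set

private lemma gron_s14 {g df : ℝ → ℝ} {K d T : ℝ} (hT : 0 ≤ T)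
    (hg : ContinuousOn g (Icc 0 T))
    (hd : ∀ t ∈ Ico (0:ℝ) T, HasDerivWithinAt g (df t) (Ici t) t)
    (h0 : g 0 ≤ d) (hb : ∀ t ∈ Ico (0:ℝ) T, df t ≤ K * g t) :
    g T ≤ d * Real.exp (K * T) := by
  have := le_gronwallBound_of_liminf_deriv_right_le hg
    (fun t ht r hr => (hd t ht).liminf_right_slope_le hr) h0
    (ε := 0) (fun t ht => by simpa using hb t ht)
  simpa [gronwallBound_ε0] using this T (right_mem_Icc.2 hT)

private lemma e2norm (y : EuclideanSpace ℝ (Fin 2)) :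
    ‖y‖ = Real.sqrt (y 0 * y 0 + y 1 * y 1) := by
  rw [EuclideanSpace.norm_eq]
  simp only [Fin.sum_univ_two, Real.norm_eq_abs, sq_abs]
  ring_nf

private lemma e2coord (y : EuclideanSpace ℝ (Fin 2)) : |y 0| ≤ ‖y‖ := by
  rw [e2norm, ← Real.sqrt_mul_self_eq_abs]
  exact Real.sqrt_le_sqrt (by nlinarith [mul_self_nonneg (y 1)])

set_option maxHeartbeats 1000000 in
/-- Planar widely-spaced case (`A = diag(a, κa)`, `a < 0`,
`κ ≥ α`): there are `δ, k > 0` such that for any solution `x` with initial datum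
`x₀`, `‖x₀‖ < δ`, the integral defining
`ψ₁(x₀) = x₀₁ + ∫₀^∞ e^{−as} b₁(x(s)) ds` converges and
`|ψ₁(x₀) − x₀₁| ≤ k ‖x₀‖^α`. -/
theorem stmt14 (a κ : ℝ) (ha : a < 0) (hκ1 : 1 ≤ κ)
    (b : EuclideanSpace ℝ (Fin 2) → EuclideanSpace ℝ (Fin 2))
    (hb : ContDiff ℝ 1 b)
    (δ₀ K₁ K₂ α β : ℝ) (hδ₀ : 0 < δ₀) (hK₁ : 0 < K₁) (hK₂ : 0 < K₂)
    (hα : 1 < α) (hβ : 0 < β)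
    (hbnd : ∀ y : EuclideanSpace ℝ (Fin 2), ‖y‖ < δ₀ → ‖b y‖ ≤ K₁ * ‖y‖ ^ α)
    (hDbnd : ∀ y : EuclideanSpace ℝ (Fin 2), ‖y‖ < δ₀ → ‖fderiv ℝ b y‖ ≤ K₂ * ‖y‖ ^ β)
    (hκα : α ≤ κ) :
    ∃ δ > 0, ∃ k > 0, ∀ x₀ : EuclideanSpace ℝ (Fin 2), ‖x₀‖ < δ →
      ∀ x : ℝ → EuclideanSpace ℝ (Fin 2), IsSolutionP a κ b x → x 0 = x₀ →
        IntegrableOn (fun s => Real.exp (-a * s) * b (x s) 0) (Ici 0) volume ∧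
        |(x₀ 0 + ∫ s in Ici (0 : ℝ), Real.exp (-a * s) * b (x s) 0) - x₀ 0|
          ≤ k * ‖x₀‖ ^ α := by
  have hα0 : (0:ℝ) < α := lt_trans one_pos hα
  have haα : a * α < a := by nlinarith
  set c : ℝ := (a + a/α)/2 with hc_def
  have hαc : α * c = (α*a + a)/2 := by rw [hc_def]; field_simp
  have hada : a < a/α := (lt_div_iff₀ hα0).mpr (by nlinarith)
  have hc : c < 0 := by
    have : a/α < 0 := div_neg_of_neg_of_pos ha hα0
    rw [hc_def]; linarith
  have hε : 0 < c - a := by rw [hc_def]; linarith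
  set m : ℝ := a - α * c with hm_def
  have hm : 0 < m := by rw [hm_def, hαc]; nlinarith
  set r : ℝ := min (δ₀/2) (((c-a)/K₁) ^ (α-1)⁻¹) with hr_def
  have hεK : 0 < (c-a) / K₁ := div_pos hε hK₁
  have hr0 : 0 < r := lt_min (by linarith) (Real.rpow_pos_of_pos hεK _)
  have hrδ₀ : r < δ₀ := lt_of_le_of_lt (min_le_left _ _) (by linarith)
  have hrε : K₁ * r ^ (α - 1) ≤ c - a := by
    have h1 : r ^ (α-1) ≤ (((c-a)/K₁) ^ (α-1)⁻¹) ^ (α-1) :=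
      Real.rpow_le_rpow hr0.le (min_le_right _ _) (by linarith)
    rw [← Real.rpow_mul hεK.le, inv_mul_cancel₀ (by linarith : (0:ℝ) < α - 1).ne',
      Real.rpow_one] at h1
    calc K₁ * r^(α-1) ≤ K₁ * ((c-a)/K₁) := mul_le_mul_of_nonneg_left h1 hK₁.le
      _ = c - a := by field_simp
  refine ⟨r/2, by linarith, K₁/m, div_pos hK₁ hm, ?_⟩
  intro x₀ hx₀ x hsol hx0
  have hx₀r : ‖x₀‖ < r := by linarith
  have hcont : ContinuousOn x (Ici 0) := fun t ht => (hsol t ht).continuousWithinAt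
  -- componentwise derivatives
  have h0' : ∀ t, 0 ≤ t → HasDerivWithinAt (fun s => x s 0)
      (a * x t 0 + b (x t) 0) (Ici 0) t := by
    intro t ht
    have := (EuclideanSpace.proj (0 : Fin 2)).hasFDerivAt.comp_hasDerivWithinAt t (hsol t ht)
    simpa [ePair, Function.comp_def] using this
  have h1' : ∀ t, 0 ≤ t → HasDerivWithinAt (fun s => x s 1)
      (κ * a * x t 1 + b (x t) 1) (Ici 0) t := by
    intro t ht
    have := (EuclideanSpace.proj (1 : Fin 2)).hasFDerivAt.comp_hasDerivWithinAt t (hsol t ht)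
    simpa [ePair, Function.comp_def] using this
  -- the squared norm and its derivative
  have hgx : ∀ t, ‖x t‖ = Real.sqrt (x t 0 * x t 0 + x t 1 * x t 1) := fun t => e2norm (x t)
  have hg0 : ∀ t, 0 ≤ x t 0 * x t 0 + x t 1 * x t 1 :=
    fun t => add_nonneg (mul_self_nonneg _) (mul_self_nonneg _)
  have hgsq : ∀ t, x t 0 * x t 0 + x t 1 * x t 1 = ‖x t‖ * ‖x t‖ := by
    intro t
    rw [hgx t, Real.mul_self_sqrt (hg0 t)]
  have hgD : ∀ t, 0 ≤ t → HasDerivWithinAt (fun s => x s 0 * x s 0 + x s 1 * x s 1)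
      (2 * x t 0 * (a * x t 0 + b (x t) 0) + 2 * x t 1 * (κ * a * x t 1 + b (x t) 1))
      (Ici 0) t := by
    intro t ht
    have h := ((h0' t ht).mul (h0' t ht)).add ((h1' t ht).mul (h1' t ht))
    convert h using 1
    all_goals first | rfl | ring
  -- the key differential inequality while ‖x t‖ ≤ r
  have hbd : ∀ t, 0 ≤ t → ‖x t‖ ≤ r →
      2 * x t 0 * (a * x t 0 + b (x t) 0) + 2 * x t 1 * (κ * a * x t 1 + b (x t) 1)
        ≤ (2*c) * (x t 0 * x t 0 + x t 1 * x t 1) := by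
    intro t ht hxr
    have hxδ : ‖x t‖ < δ₀ := lt_of_le_of_lt hxr hrδ₀
    have hbx := hbnd (x t) hxδ
    have hinner : x t 0 * b (x t) 0 + x t 1 * b (x t) 1 ≤ ‖x t‖ * ‖b (x t)‖ := by
      have := real_inner_le_norm (x t) (b (x t))
      simpa [PiLp.inner_apply, RCLike.inner_apply, Fin.sum_univ_two, mul_comm] using this
    have hκt : κ * a * (x t 1 * x t 1) ≤ a * (x t 1 * x t 1) := by
      nlinarith [mul_nonpos_of_nonpos_of_nonneg ha.le
        (mul_nonneg (sub_nonneg.mpr hκ1) (mul_self_nonneg (x t 1)))]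
    have hnl : K₁ * ‖x t‖ ^ α ≤ (c-a) * ‖x t‖ := by
      rcases eq_or_lt_of_le (norm_nonneg (x t)) with h0 | h0
      · rw [← h0, Real.zero_rpow hα0.ne']
        simp
      · have hsplit : ‖x t‖ ^ α = ‖x t‖ ^ (α - 1) * ‖x t‖ := by
          calc ‖x t‖ ^ α = ‖x t‖ ^ (α - 1 + 1) := by norm_num
            _ = ‖x t‖ ^ (α-1) * ‖x t‖ ^ (1:ℝ) := Real.rpow_add h0 _ _
            _ = ‖x t‖ ^ (α-1) * ‖x t‖ := by rw [Real.rpow_one]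
        rw [hsplit]
        have h2 : ‖x t‖ ^ (α-1) ≤ r ^ (α-1) :=
          Real.rpow_le_rpow (norm_nonneg _) hxr (by linarith)
        calc K₁ * (‖x t‖^(α-1) * ‖x t‖) ≤ K₁ * (r^(α-1) * ‖x t‖) :=
              mul_le_mul_of_nonneg_left
                (mul_le_mul_of_nonneg_right h2 (norm_nonneg _)) hK₁.le
          _ = (K₁ * r^(α-1)) * ‖x t‖ := by ring
          _ ≤ (c-a) * ‖x t‖ := mul_le_mul_of_nonneg_right hrε (norm_nonneg _)
    have hbterm : x t 0 * b (x t) 0 + x t 1 * b (x t) 1 ≤ (c-a) * (‖x t‖ * ‖x t‖) := by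
      calc x t 0 * b (x t) 0 + x t 1 * b (x t) 1 ≤ ‖x t‖ * ‖b (x t)‖ := hinner
        _ ≤ ‖x t‖ * (K₁ * ‖x t‖^α) := mul_le_mul_of_nonneg_left hbx (norm_nonneg _)
        _ = K₁ * ‖x t‖^α * ‖x t‖ := by ring
        _ ≤ (c-a) * ‖x t‖ * ‖x t‖ := mul_le_mul_of_nonneg_right hnl (norm_nonneg _)
        _ = (c-a) * (‖x t‖ * ‖x t‖) := by ring
    have hgd := hgsq t
    calc 2 * x t 0 * (a * x t 0 + b (x t) 0) + 2 * x t 1 * (κ * a * x t 1 + b (x t) 1)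
        = 2*a*(x t 0 * x t 0) + 2*(κ*a*(x t 1 * x t 1))
          + 2*(x t 0 * b (x t) 0 + x t 1 * b (x t) 1) := by ring
      _ ≤ 2*a*(x t 0 * x t 0) + 2*(a*(x t 1 * x t 1))
          + 2*((c-a) * (‖x t‖ * ‖x t‖)) := by linarith
      _ = 2*a*(x t 0 * x t 0 + x t 1 * x t 1) + 2*(c-a)*(‖x t‖ * ‖x t‖) := by ring
      _ = 2*a*(x t 0 * x t 0 + x t 1 * x t 1)
          + 2*(c-a)*(x t 0 * x t 0 + x t 1 * x t 1) := by rw [hgd]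
      _ = (2*c) * (x t 0 * x t 0 + x t 1 * x t 1) := by ring
  -- continuity of the squared norm
  have hgcont : ContinuousOn (fun s => x s 0 * x s 0 + x s 1 * x s 1) (Ici 0) := by
    have h0c : ContinuousOn (fun s => x s 0) (Ici 0) :=
      (EuclideanSpace.proj (0:Fin 2)).continuous.comp_continuousOn hcont
    have h1c : ContinuousOn (fun s => x s 1) (Ici 0) :=
      (EuclideanSpace.proj (1:Fin 2)).continuous.comp_continuousOn hcont
    exact (h0c.mul h0c).add (h1c.mul h1c)
  -- Grönwall up to time T, assuming smallness before T
  have hgron : ∀ T, 0 ≤ T → (∀ s, 0 ≤ s → s < T → ‖x s‖ ≤ r) →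
      x T 0 * x T 0 + x T 1 * x T 1 ≤ (‖x₀‖*‖x₀‖) * Real.exp (2*c*T) := by
    intro T hT hsmall
    refine gron_s14 (g := fun s => x s 0 * x s 0 + x s 1 * x s 1)
      (df := fun t => 2 * x t 0 * (a * x t 0 + b (x t) 0)
        + 2 * x t 1 * (κ * a * x t 1 + b (x t) 1))
      (K := 2*c) (d := ‖x₀‖*‖x₀‖) hT (hgcont.mono (Icc_subset_Ici_self))
      (fun t htm => (hgD t htm.1).mono (Ici_subset_Ici.mpr htm.1))
      ?_ (fun t htm => hbd t htm.1 (hsmall t htm.1 htm.2))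
    show x 0 0 * x 0 0 + x 0 1 * x 0 1 ≤ ‖x₀‖*‖x₀‖
    rw [hgsq 0, hx0]
  -- bootstrap: the solution stays inside the ball of radius r
  have hsmall : ∀ t, 0 ≤ t → ‖x t‖ < r := by
    by_contra hcon
    push_neg at hcon
    obtain ⟨t₁, ht₁0, ht₁⟩ := hcon
    have hSne : {t | 0 ≤ t ∧ r ≤ ‖x t‖}.Nonempty := ⟨t₁, ht₁0, ht₁⟩
    have hSbdd : BddBelow {t | 0 ≤ t ∧ r ≤ ‖x t‖} := ⟨0, fun t ht => ht.1⟩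
    have hSclosed : IsClosed {t | 0 ≤ t ∧ r ≤ ‖x t‖} := by
      have hset : {t | 0 ≤ t ∧ r ≤ ‖x t‖} = Ici 0 ∩ (fun t => ‖x t‖) ⁻¹' (Ici r) := by
        ext t; simp [mem_Ici]
      rw [hset]
      exact (continuous_norm.comp_continuousOn hcont).preimage_isClosed_of_isClosed
        isClosed_Ici isClosed_Ici
    set T := sInf {t | 0 ≤ t ∧ r ≤ ‖x t‖} with hT_def
    have hTS : T ∈ {t | 0 ≤ t ∧ r ≤ ‖x t‖} := hSclosed.csInf_mem hSne hSbdd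
    have hT0 : 0 ≤ T := hTS.1
    have hpre : ∀ s, 0 ≤ s → s < T → ‖x s‖ ≤ r := by
      intro s hs hsT
      by_contra hbad
      push_neg at hbad
      exact absurd (csInf_le hSbdd ⟨hs, hbad.le⟩) (not_le.mpr hsT)
    have hgT := hgron T hT0 hpre
    have hexp : Real.exp (2*c*T) ≤ 1 := Real.exp_le_one_iff.mpr (by nlinarith)
    have hrT : r ≤ ‖x T‖ := hTS.2
    have hgd := hgsq T
    have h1 : ‖x T‖ * ‖x T‖ ≤ ‖x₀‖ * ‖x₀‖ := by
      rw [← hgd]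
      calc x T 0 * x T 0 + x T 1 * x T 1 ≤ (‖x₀‖*‖x₀‖) * Real.exp (2*c*T) := hgT
        _ ≤ (‖x₀‖*‖x₀‖) * 1 :=
            mul_le_mul_of_nonneg_left hexp (mul_nonneg (norm_nonneg _) (norm_nonneg _))
        _ = ‖x₀‖*‖x₀‖ := mul_one _
    nlinarith [norm_nonneg (x T), norm_nonneg x₀]
  -- exponential decay of the solution
  have hdecay : ∀ t, 0 ≤ t → ‖x t‖ ≤ ‖x₀‖ * Real.exp (c*t) := by
    intro t ht
    have hg := hgron t ht (fun s hs _ => (hsmall s hs).le)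
    have h2 : (‖x₀‖*‖x₀‖) * Real.exp (2*c*t)
        = (‖x₀‖ * Real.exp (c*t)) * (‖x₀‖ * Real.exp (c*t)) := by
      rw [show (2:ℝ)*c*t = c*t + c*t by ring, Real.exp_add]; ring
    have hB : 0 ≤ ‖x₀‖ * Real.exp (c*t) := mul_nonneg (norm_nonneg x₀) (Real.exp_pos (c*t)).le
    rw [hgx t]
    calc Real.sqrt (x t 0 * x t 0 + x t 1 * x t 1)
        ≤ Real.sqrt ((‖x₀‖ * Real.exp (c*t)) * (‖x₀‖ * Real.exp (c*t))) :=
          Real.sqrt_le_sqrt (by linarith)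
      _ = ‖x₀‖ * Real.exp (c*t) := Real.sqrt_mul_self hB
  -- pointwise bound on the integrand
  have hmain : ∀ s, 0 ≤ s → ‖Real.exp (-a*s) * b (x s) 0‖
      ≤ K₁ * ‖x₀‖^α * Real.exp (-m * s) := by
    intro s hs
    have hxs := hdecay s hs
    have hxsδ : ‖x s‖ < δ₀ := lt_trans (hsmall s hs) hrδ₀
    have h5 : |b (x s) 0| ≤ K₁ * (‖x₀‖^α * Real.exp (c*s*α)) := by
      calc |b (x s) 0| ≤ ‖b (x s)‖ := e2coord _
        _ ≤ K₁ * ‖x s‖^α := hbnd _ hxsδ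
        _ ≤ K₁ * (‖x₀‖ * Real.exp (c*s))^α :=
            mul_le_mul_of_nonneg_left
              (Real.rpow_le_rpow (norm_nonneg _) hxs hα0.le) hK₁.le
        _ = K₁ * (‖x₀‖^α * Real.exp (c*s*α)) := by
            rw [Real.mul_rpow (norm_nonneg _) (Real.exp_pos _).le, ← Real.exp_mul]
    rw [norm_mul, Real.norm_eq_abs, Real.norm_eq_abs, abs_of_pos (Real.exp_pos _)]
    calc Real.exp (-a*s) * |b (x s) 0|
        ≤ Real.exp (-a*s) * (K₁ * (‖x₀‖^α * Real.exp (c*s*α))) :=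
          mul_le_mul_of_nonneg_left h5 (Real.exp_pos _).le
      _ = K₁ * ‖x₀‖^α * (Real.exp (-a*s) * Real.exp (c*s*α)) := by ring
      _ = K₁ * ‖x₀‖^α * Real.exp (-m*s) := by
          rw [← Real.exp_add]
          congr 1
          rw [hm_def]; ring
  -- integrability
  have hG : IntegrableOn (fun s => K₁ * ‖x₀‖^α * Real.exp (-m*s)) (Ici 0) volume :=
    (integrableOn_Ici_iff_integrableOn_Ioi).mpr ((exp_neg_integrableOn_Ioi 0 hm).const_mul _)
  have hfm : AEStronglyMeasurable (fun s => Real.exp (-a*s) * b (x s) 0)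
      (volume.restrict (Ici 0)) := by
    apply ContinuousOn.aestronglyMeasurable _ measurableSet_Ici
    exact (Real.continuous_exp.comp (continuous_const.mul continuous_id)).continuousOn.mul
      (((EuclideanSpace.proj (0:Fin 2)).continuous.comp hb.continuous).comp_continuousOn hcont)
  have hae : ∀ᵐ s ∂(volume.restrict (Ici (0:ℝ))),
      ‖Real.exp (-a*s) * b (x s) 0‖ ≤ K₁ * ‖x₀‖^α * Real.exp (-m*s) :=
    (ae_restrict_iff' measurableSet_Ici).mpr (ae_of_all _ hmain)
  have hint : IntegrableOn (fun s => Real.exp (-a*s) * b (x s) 0) (Ici 0) volume :=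
    Integrable.mono' hG hfm hae
  refine ⟨hint, ?_⟩
  rw [add_sub_cancel_left]
  have hle := norm_integral_le_of_norm_le hG hae
  calc |∫ s in Ici (0:ℝ), Real.exp (-a*s) * b (x s) 0|
      = ‖∫ s in Ici (0:ℝ), Real.exp (-a*s) * b (x s) 0‖ := (Real.norm_eq_abs _).symm
    _ ≤ ∫ s in Ici (0:ℝ), K₁ * ‖x₀‖^α * Real.exp (-m*s) := hle
    _ = K₁ * ‖x₀‖^α * ∫ s in Ici (0:ℝ), Real.exp (-m*s) := by
        rw [integral_const_mul]
    _ = K₁ * ‖x₀‖^α * m⁻¹ := by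
        rw [integral_Ici_eq_integral_Ioi]
        congr 1
        have h := integral_comp_mul_left_Ioi (fun y => Real.exp (-y)) 0 hm
        simp only [mul_zero, smul_eq_mul, integral_exp_neg_Ioi, neg_zero, Real.exp_zero,
          mul_one] at h
        rw [show (fun s : ℝ => Real.exp (-m*s)) = fun s : ℝ => Real.exp (-(m*s)) by
          funext s; ring_nf]
        exact h
    _ = K₁/m * ‖x₀‖^α := by ring
end

section
/- Let ε > 0 and 0 < η < 1, and define λ₊ := (−(ε+1) + √((ε+1)² − 4εη))/(2ε) and λ₋ := (−(ε+1) − √((ε+1)² − 4εη))/(2ε). Then (ε+1)² − 4εη > 0, the strict inequalities λ₋ < −1 < −η < λ₊ < 0 hold, and the ratio κ := λ₋/λ₊ satisfies κ > max(ε, ε⁻¹) ≥ 1. -/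
/-- For `ε > 0` and `0 < η < 1`, setting
`λ₊ = (−(ε+1) + √((ε+1)² − 4εη))/(2ε)` and `λ₋ = (−(ε+1) − √((ε+1)² − 4εη))/(2ε)`
(the slow and fast eigenvalues of the dimensionless Michaelis–Menten planar
reduction), we have `(ε+1)² − 4εη > 0`, the strict inequalities
`λ₋ < −1 < −η < λ₊ < 0`, and `κ = λ₋/λ₊ > max(ε, ε⁻¹) ≥ 1`. -/
theorem stmt19 (ε η : ℝ) (hε : 0 < ε) (hη0 : 0 < η) (hη1 : η < 1)
    (lamP lamM : ℝ)
    (hP : lamP = (-(ε + 1) + Real.sqrt ((ε + 1) ^ 2 - 4 * ε * η)) / (2 * ε))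
    (hM : lamM = (-(ε + 1) - Real.sqrt ((ε + 1) ^ 2 - 4 * ε * η)) / (2 * ε)) :
    0 < (ε + 1) ^ 2 - 4 * ε * η ∧
    lamM < -1 ∧ -1 < -η ∧ -η < lamP ∧ lamP < 0 ∧
    max ε ε⁻¹ < lamM / lamP ∧ 1 ≤ max ε ε⁻¹ := by
  have hDpos : 0 < (ε + 1) ^ 2 - 4 * ε * η := by nlinarith [sq_nonneg (ε - 1)]
  set s := Real.sqrt ((ε + 1) ^ 2 - 4 * ε * η) with hs
  have hs0 : 0 < s := Real.sqrt_pos.mpr hDpos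
  have hs2 : s ^ 2 = (ε + 1) ^ 2 - 4 * ε * η := Real.sq_sqrt hDpos.le
  have hsl : (ε - 1) ^ 2 < s ^ 2 := by nlinarith
  have h1 : ε - 1 < s := by nlinarith [sq_nonneg (s + ε - 1)]
  have h1' : 1 - ε < s := by nlinarith [sq_nonneg (s + 1 - ε)]
  have h2 : s < ε + 1 := by nlinarith [sq_nonneg (s - ε - 1)]
  have h2ε : (0:ℝ) < 2 * ε := by linarith
  have hPneg : lamP < 0 := by
    rw [hP, div_neg_iff]; right; constructor <;> nlinarith
  have hPgt : -η < lamP := by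
    rw [hP, lt_div_iff₀ h2ε]
    nlinarith [sq_nonneg (s - (ε + 1 - 2 * ε * η))]
  have hMlt : lamM < -1 := by
    rw [hM, div_lt_iff₀ h2ε]; nlinarith
  refine ⟨hDpos, hMlt, by linarith, hPgt, hPneg, ?_, ?_⟩
  · have hκε : ε < lamM / lamP := by
      rw [lt_div_iff_of_neg hPneg, hP, hM, div_lt_iff₀ h2ε]
      have : ε * ((-(ε + 1) + s) / (2 * ε)) * (2 * ε)
          = ε * (-(ε + 1) + s) := by field_simp
      rw [this]; nlinarith
    have hκεi : ε⁻¹ < lamM / lamP := by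
      rw [lt_div_iff_of_neg hPneg, hP, hM, div_lt_iff₀ h2ε]
      have : ε⁻¹ * ((-(ε + 1) + s) / (2 * ε)) * (2 * ε)
          = ε⁻¹ * (-(ε + 1) + s) := by field_simp
      rw [this]
      have hεi : ε⁻¹ * ε = 1 := inv_mul_cancel₀ hε.ne'
      nlinarith [mul_pos (inv_pos.mpr hε) hs0]
    exact max_lt hκε hκεi
  · rcases le_total ε 1 with h | h
    · exact le_max_of_le_right ((one_le_inv₀ hε).mpr h)
    · exact le_max_of_le_left h
end
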